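/- Let F be a field, let n = ν·n_ℓ with ν ≥ 1 and n_ℓ ≥ 1, and let γ ∈ F be a primitive n-th root of unity. Then for every i with 0 ≤ i ≤ ν−1 there exists a polynomial e⁽ⁱ⁾ ∈ F[X] of the form e⁽ⁱ⁾(X) = h_i(X^{n_ℓ}) for some h_i ∈ F[X] with deg h_i ≤ ν−1 (so deg e⁽ⁱ⁾ ≤ n_ℓ(ν−1)), such that e⁽ⁱ⁾ ≡ 1 modulo (X^{n_ℓ} − γ^{i·n_ℓ}) and e⁽ⁱ⁾ ≡ 0 modulo (X^{n_ℓ} − γ^{j·n_ℓ}) for every j ≠ i with 0 ≤ j ≤ ν−1. -/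

import Mathlib

open Polynomial

private lemma dvd_comp_of_root {F : Type*} [Field F] (nℓ : ℕ) (c : F) (p : F[X])
    (hroot : p.eval c = 0) :
    (X ^ nℓ - Polynomial.C c) ∣ p.comp (X ^ nℓ) := by
  have h1 : (X - Polynomial.C c) ∣ p := dvd_iff_isRoot.mpr hroot
  obtain ⟨q, hq⟩ := h1
  refine ⟨q.comp (X ^ nℓ), ?_⟩
  have := congrArg (fun r => r.comp (X ^ nℓ)) hq
  simpa [sub_comp, mul_comp] using this

/-- The CRT idempotent-like polynomials `e⁽ⁱ⁾` of the Tamo-Barg construction: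
for each coset index `i` there is a polynomial `e⁽ⁱ⁾(X) = h_i(X^{n_ℓ})`, with
`deg h_i ≤ ν−1` (so `deg e⁽ⁱ⁾ ≤ n_ℓ(ν−1)`), which is `≡ 1` modulo
`X^{n_ℓ} − γ^{i·n_ℓ}` and `≡ 0` modulo `X^{n_ℓ} − γ^{j·n_ℓ}` for every `j ≠ i`. -/
theorem crt_idempotent_polynomials
    (F : Type*) [Field F] (ν nℓ : ℕ) (hν : 1 ≤ ν) (hnℓ : 1 ≤ nℓ)
    (γ : F) (hγ : IsPrimitiveRoot γ (ν * nℓ)) :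
    ∀ i : ℕ, i ≤ ν - 1 →
      ∃ h : F[X], h.degree ≤ (ν - 1 : ℕ) ∧
        (X ^ nℓ - Polynomial.C (γ ^ (i * nℓ))) ∣ (h.comp (X ^ nℓ) - 1) ∧
        (∀ j : ℕ, j ≤ ν - 1 → j ≠ i →
          (X ^ nℓ - Polynomial.C (γ ^ (j * nℓ))) ∣ h.comp (X ^ nℓ)) := by
  intro i hi
  have hiν : i < ν := by omega
  have hn : 0 < ν * nℓ := by positivity
  have hprim : IsPrimitiveRoot (γ ^ nℓ) ν := hγ.pow hn (mul_comm ν nℓ)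
  set v : ℕ → F := fun j => γ ^ (j * nℓ) with hv
  have hvpow : ∀ j, v j = (γ ^ nℓ) ^ j := fun j => by
    rw [hv]; show γ ^ (j * nℓ) = _; rw [mul_comm, pow_mul]
  have hinj : Set.InjOn v (Finset.range ν) := by
    intro a ha b hb hab
    simp only [Finset.coe_range, Set.mem_Iio] at ha hb
    rw [hvpow, hvpow] at hab
    exact hprim.pow_inj ha hb hab
  set r : ℕ → F := fun j => if j = i then 1 else 0 with hr
  set h : F[X] := Lagrange.interpolate (Finset.range ν) v r with hh
  have hdeglt : h.degree < (ν : WithBot ℕ) := by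
    have := Lagrange.degree_interpolate_lt r hinj
    rw [Finset.card_range] at this
    exact this
  have heval : ∀ j ∈ Finset.range ν, h.eval (v j) = r j := fun j hj =>
    Lagrange.eval_interpolate_at_node r hinj hj
  refine ⟨h, ?_, ?_, ?_⟩
  · rcases eq_or_ne h 0 with h0 | h0
    · simp [h0]
    · rw [degree_eq_natDegree h0] at hdeglt ⊢
      have hlt : h.natDegree < ν := by exact_mod_cast hdeglt
      exact_mod_cast Nat.le_pred_of_lt hlt
  · have h1 : h.eval (v i) = 1 := by
      rw [heval i (Finset.mem_range.mpr hiν)]; simp [hr]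
    have : (X ^ nℓ - Polynomial.C (v i)) ∣ (h - 1).comp (X ^ nℓ) :=
      dvd_comp_of_root nℓ (v i) (h - 1) (by simp [h1])
    simpa [sub_comp, hv] using this
  · intro j hj hji
    have hjν : j < ν := by omega
    have h0 : h.eval (v j) = 0 := by
      rw [heval j (Finset.mem_range.mpr hjν)]; simp [hr, hji]
    exact dvd_comp_of_root nℓ (v j) h h0
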